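/- Fix a real number q > 1 and δ ∈ [−1/2, 0). Then for every integer m ≥ 1: (a) φ_{iδ}(2m) is a positive real number; (b) for every real α with −τ/2 < α < τ/2 and α ≠ 0, |φ_{α+iδ}(2m)| < φ_{iδ}(2m); and (c) φ_{τ/2+iδ}(2m) = φ_{iδ}(2m). -/

import Mathlib

/-- `q^w = exp(w log q)`. -/
noncomputable def qpow (q : ℝ) (w : ℂ) : ℂ := Complex.exp (w * (Real.log q : ℂ))

/-- `τ = 2π / log q`. -/
noncomputable def tauq (q : ℝ) : ℝ := 2 * Real.pi / Real.log q

/-- The elementary spherical function value `φ_z(n)` on a homogeneous tree of degree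
`q+1`: `φ_z(0) = 1` and for `n ≥ 1`,
`φ_z(n) = (1/(q+1))·[q^{1-n/2}(q^{iz(n+1)} - q^{-iz(n+1)}) - q^{-n/2}(q^{iz(n-1)} - q^{-iz(n-1)})] / (q^{iz} - q^{-iz})`. -/
noncomputable def phiSph (q : ℝ) (z : ℂ) (n : ℕ) : ℂ :=
  if n = 0 then 1 else
    (1 / ((q : ℂ) + 1)) *
      ((qpow q (1 - (n : ℂ) / 2) *
          (qpow q (Complex.I * z * ((n : ℂ) + 1)) - qpow q (-(Complex.I * z) * ((n : ℂ) + 1))) -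
        qpow q (-(n : ℂ) / 2) *
          (qpow q (Complex.I * z * ((n : ℂ) - 1)) - qpow q (-(Complex.I * z) * ((n : ℂ) - 1)))) /
        (qpow q (Complex.I * z) - qpow q (-(Complex.I * z))))

namespace Stmt10Aux

lemma qpow_add (q : ℝ) (a b : ℂ) : qpow q (a + b) = qpow q a * qpow q b := by
  rw [qpow, qpow, qpow, ← Complex.exp_add]; congr 1; ring

lemma qpow_neg (q : ℝ) (a : ℂ) : qpow q (-a) = (qpow q a)⁻¹ := by
  rw [qpow, qpow, ← Complex.exp_neg]; congr 1; ring

lemma qpow_ne_zero (q : ℝ) (a : ℂ) : qpow q a ≠ 0 := Complex.exp_ne_zero _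

lemma qpow_natmul (q : ℝ) (n : ℕ) (a : ℂ) : qpow q ((n:ℂ) * a) = (qpow q a) ^ n := by
  rw [qpow, qpow, ← Complex.exp_nat_mul]; congr 1; ring

lemma qpow_one (q : ℝ) (hq : 0 < q) : qpow q 1 = (q:ℂ) := by
  rw [qpow, one_mul, ← Complex.ofReal_exp, Real.exp_log hq]

lemma qpow_nat (q : ℝ) (hq : 0 < q) (n : ℕ) : qpow q (n:ℂ) = ((q:ℂ)) ^ n := by
  rw [show ((n:ℕ):ℂ) = (n:ℂ) * 1 by ring, qpow_natmul, qpow_one q hq]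

lemma qpow_ne_qpow_neg (q : ℝ) (a : ℂ) (h : 1 < ‖qpow q a‖) :
    qpow q a ≠ qpow q (-a) := by
  rw [qpow_neg]
  intro he
  have hA0 : (0:ℝ) < ‖qpow q a‖ := lt_trans one_pos h
  have h2 : ‖qpow q a‖ = (‖qpow q a‖)⁻¹ := by
    conv_lhs => rw [he]
    rw [norm_inv]
  have h3 : ‖qpow q a‖ * ‖qpow q a‖ = 1 := by
    nth_rewrite 1 [h2]
    exact inv_mul_cancel₀ (ne_of_gt hA0)
  nlinarith

noncomputable def cf (q : ℝ) (m k : ℕ) : ℝ := if k = m then q else q - 1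

noncomputable def Tc2 (q : ℝ) (m : ℕ) (u v : ℂ) : ℂ :=
  ((q:ℂ) - 1) + ∑ k ∈ Finset.Icc 1 m, ((cf q m k : ℝ) : ℂ) * (u ^ (2*k) + v ^ (2*k))

noncomputable def Tr (q : ℝ) (m : ℕ) (s : ℝ) : ℝ :=
  (q - 1) + ∑ k ∈ Finset.Icc 1 m, cf q m k * (s ^ (2*k) + (s⁻¹) ^ (2*k))

lemma cf_pos (q : ℝ) (hq : 1 < q) (m k : ℕ) : 0 < cf q m k := by
  unfold cf; split <;> linarith

lemma Tc2_ofReal (q : ℝ) (m : ℕ) (s : ℝ) :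
    Tc2 q m ((s:ℂ)) ((s:ℂ))⁻¹ = ((Tr q m s : ℝ) : ℂ) := by
  unfold Tc2 Tr
  push_cast
  ring

lemma Tc2_neg (q : ℝ) (m : ℕ) (u : ℂ) : Tc2 q m (-u) (-u)⁻¹ = Tc2 q m u u⁻¹ := by
  unfold Tc2
  congr 1
  refine Finset.sum_congr rfl fun k _ => ?_
  rw [inv_neg, Even.neg_pow (even_two_mul k), Even.neg_pow (even_two_mul k)]

lemma Tr_pos (q : ℝ) (hq : 1 < q) (m : ℕ) (s : ℝ) (hs : 0 < s) : 0 < Tr q m s := by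
  unfold Tr
  have h1 : (0:ℝ) < q - 1 := by linarith
  have h2 : (0:ℝ) ≤ ∑ k ∈ Finset.Icc 1 m, cf q m k * (s ^ (2*k) + (s⁻¹) ^ (2*k)) := by
    apply Finset.sum_nonneg
    intro k _
    have := cf_pos q hq m k
    positivity
  linarith

lemma key (q : ℝ) (m : ℕ) (hm : 1 ≤ m) (u v : ℂ) (huv : u * v = 1) :
    (u - v) * Tc2 q m u v
      = (q:ℂ) * (u ^ (2*m+1) - v ^ (2*m+1)) - (u ^ (2*m) * v - v ^ (2*m) * u) := by
  induction m with
  | zero => omega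
  | succ n ih =>
    rcases Nat.eq_or_lt_of_le hm with h1 | h2
    · have hn : n = 0 := by omega
      subst hn
      simp only [Tc2, Finset.Icc_self, Finset.sum_singleton, cf, if_pos rfl]
      push_cast
      linear_combination (-(q:ℂ)+1) * (u - v) * huv
    · have hn : 1 ≤ n := by omega
      have ihn := ih hn
      have hsum : ∑ k ∈ Finset.Icc 1 (n+1), ((cf q (n+1) k : ℝ) : ℂ) * (u ^ (2*k) + v ^ (2*k))
          = (∑ k ∈ Finset.Icc 1 n, ((cf q n k : ℝ) : ℂ) * (u ^ (2*k) + v ^ (2*k)))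
            - (u ^ (2*n) + v ^ (2*n)) + (q:ℂ) * (u ^ (2*(n+1)) + v ^ (2*(n+1))) := by
        rw [Finset.sum_Icc_succ_top (by omega : 1 ≤ n + 1)]
        have : ∑ k ∈ Finset.Icc 1 n, ((cf q (n+1) k : ℝ) : ℂ) * (u ^ (2*k) + v ^ (2*k))
            = ∑ k ∈ Finset.Icc 1 n, (((cf q n k : ℝ) : ℂ) * (u ^ (2*k) + v ^ (2*k))
                - if k = n then (u ^ (2*k) + v ^ (2*k)) else 0) := by
          apply Finset.sum_congr rfl
          intro k hk
          simp only [Finset.mem_Icc] at hk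
          by_cases h : k = n
          · subst h
            simp only [cf, if_pos rfl, if_neg (by omega : ¬ k = k + 1)]
            push_cast; ring
          · simp only [cf, if_neg h, if_neg (by omega : ¬ k = n + 1), h, if_false]
            push_cast; ring
        rw [this, Finset.sum_sub_distrib, Finset.sum_ite_eq' (Finset.Icc 1 n) n,
          if_pos (by simp [Finset.mem_Icc]; omega)]
        simp only [cf, if_pos rfl]
        push_cast; ring
      simp only [Tc2] at ihn ⊢
      rw [hsum]
      linear_combination ihn - ((q:ℂ) - 1) * (u ^ (2*n+1) - v ^ (2*n+1)) * huv

lemma phi_formula (q : ℝ) (hq : 1 < q) (z : ℂ) (m : ℕ) (hm : 1 ≤ m)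
    (hne : qpow q (Complex.I * z) ≠ qpow q (-(Complex.I * z))) :
    phiSph q z (2*m)
      = (((q ^ m)⁻¹ / (q + 1) : ℝ) : ℂ)
          * Tc2 q m (qpow q (Complex.I * z)) (qpow q (Complex.I * z))⁻¹ := by
  have hq0 : (0:ℝ) < q := by linarith
  set u := qpow q (Complex.I * z) with hudef
  have hu : u ≠ 0 := qpow_ne_zero q _
  have hv : qpow q (-(Complex.I * z)) = u⁻¹ := qpow_neg q _
  have hne' : u - u⁻¹ ≠ 0 := sub_ne_zero.mpr (by rw [← hv]; exact hne)
  have huv : u * u⁻¹ = 1 := mul_inv_cancel₀ hu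
  have hT := key q m hm u u⁻¹ huv
  have e1 : qpow q (Complex.I * z * (((2*m : ℕ) : ℂ) + 1)) = u ^ (2*m+1) := by
    rw [show Complex.I * z * (((2*m : ℕ) : ℂ) + 1) = (((2*m+1 : ℕ)):ℂ) * (Complex.I * z) by
      push_cast; ring, qpow_natmul]
  have e2 : qpow q (-(Complex.I * z) * (((2*m : ℕ) : ℂ) + 1)) = (u⁻¹) ^ (2*m+1) := by
    rw [show -(Complex.I * z) * (((2*m : ℕ) : ℂ) + 1) = (((2*m+1 : ℕ)):ℂ) * (-(Complex.I * z)) by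
      push_cast; ring, qpow_natmul, hv]
  have e3 : qpow q (Complex.I * z * (((2*m : ℕ) : ℂ) - 1)) = u ^ (2*m) * u⁻¹ := by
    rw [show Complex.I * z * (((2*m : ℕ) : ℂ) - 1)
        = (((2*m : ℕ)):ℂ) * (Complex.I * z) + (-(Complex.I * z)) by push_cast; ring,
      qpow_add, qpow_natmul, hv]
  have e4 : qpow q (-(Complex.I * z) * (((2*m : ℕ) : ℂ) - 1)) = (u⁻¹) ^ (2*m) * u := by
    rw [show -(Complex.I * z) * (((2*m : ℕ) : ℂ) - 1)
        = (((2*m : ℕ)):ℂ) * (-(Complex.I * z)) + (Complex.I * z) by push_cast; ring,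
      qpow_add, qpow_natmul, hv]
  have e5 : qpow q (1 - ((2*m : ℕ) : ℂ) / 2) = (q:ℂ) * ((q:ℂ) ^ m)⁻¹ := by
    rw [show (1 - ((2*m : ℕ) : ℂ) / 2) = 1 + (-((m:ℕ):ℂ)) by push_cast; ring,
      qpow_add, qpow_one q hq0, qpow_neg, qpow_nat q hq0]
  have e6 : qpow q (-((2*m : ℕ) : ℂ) / 2) = ((q:ℂ) ^ m)⁻¹ := by
    rw [show (-((2*m : ℕ) : ℂ) / 2) = -(((m:ℕ)):ℂ) by push_cast; ring,
      qpow_neg, qpow_nat q hq0]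
  rw [phiSph, if_neg (by omega : ¬ 2*m = 0), e1, e2, e3, e4, e5, e6, hv]
  rw [← hudef]
  push_cast
  have hN : (q:ℂ) * ((q:ℂ)^m)⁻¹ * (u^(2*m+1) - (u⁻¹)^(2*m+1))
      - ((q:ℂ)^m)⁻¹ * (u^(2*m) * u⁻¹ - (u⁻¹)^(2*m) * u)
      = ((q:ℂ)^m)⁻¹ * ((u - u⁻¹) * Tc2 q m u u⁻¹) := by rw [hT]; ring
  rw [hN, mul_comm (u - u⁻¹), mul_div_assoc, mul_div_assoc, div_self hne', mul_one]
  ring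

lemma strict_aux (a b r : ℝ) (ha : 0 < a) (hb : 0 < b) (hr : 0 < r)
    (x : ℂ) (hx : ‖x‖ = r) (hxr : x ≠ (r:ℂ)) :
    ‖(a:ℂ) + (b:ℂ) * x‖ < a + b * r := by
  have h1 : x.re ≤ r := hx ▸ Complex.re_le_norm x
  have hsq : x.re ^ 2 + x.im ^ 2 = r ^ 2 := by
    have := Complex.sq_norm x
    rw [hx] at this
    rw [this, Complex.normSq_apply]; ring
  have h2 : x.re < r := by
    rcases lt_or_eq_of_le h1 with h | h
    · exact h
    · exfalso
      apply hxr
      have him : x.im = 0 := by nlinarith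
      exact Complex.ext (by simpa using h) (by simpa using him)
  have hgoal2 : (‖(a:ℂ) + (b:ℂ) * x‖) ^ 2 < (a + b * r) ^ 2 := by
    rw [Complex.sq_norm, Complex.normSq_apply]
    simp only [Complex.add_re, Complex.add_im, Complex.ofReal_re, Complex.ofReal_im,
      Complex.mul_re, Complex.mul_im]
    have e : b^2*(x.re^2+x.im^2) = b^2*r^2 := by rw [hsq]
    nlinarith [e, mul_pos (mul_pos ha hb) (sub_pos.mpr h2)]
  exact lt_of_pow_lt_pow_left₀ 2 (by positivity) hgoal2

lemma T_bound (q : ℝ) (hq : 1 < q) (m : ℕ) (hm : 1 ≤ m) (s : ℝ) (hs : 1 < s) (u : ℂ)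
    (habs : ‖u‖ = s) (hne2 : u ^ 2 ≠ ((s:ℂ)) ^ 2) :
    ‖Tc2 q m u u⁻¹‖ < Tr q m s := by
  have hs0 : (0:ℝ) < s := by linarith
  have habsi : ‖u⁻¹‖ = s⁻¹ := by rw [norm_inv, habs]
  have hIcc : Finset.Icc 1 m = insert 1 (Finset.Icc 2 m) := by
    ext x; simp only [Finset.mem_Icc, Finset.mem_insert]; omega
  have h1n : (1:ℕ) ∉ Finset.Icc 2 m := by simp
  set c1 : ℝ := cf q m 1 with hc1
  have hc1p : 0 < c1 := cf_pos q hq m 1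
  have hTc : Tc2 q m u u⁻¹
      = (((q - 1 : ℝ):ℂ) + ((c1:ℝ):ℂ) * u ^ 2)
        + (((c1:ℝ):ℂ) * (u⁻¹) ^ 2
          + ∑ k ∈ Finset.Icc 2 m, ((cf q m k : ℝ):ℂ) * (u ^ (2*k) + (u⁻¹) ^ (2*k))) := by
    unfold Tc2
    rw [hIcc, Finset.sum_insert h1n]
    push_cast
    ring
  have hTr : Tr q m s
      = ((q - 1) + c1 * s ^ 2)
        + (c1 * (s⁻¹) ^ 2
          + ∑ k ∈ Finset.Icc 2 m, cf q m k * (s ^ (2*k) + (s⁻¹) ^ (2*k))) := by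
    unfold Tr
    rw [hIcc, Finset.sum_insert h1n]
    ring
  have hA : ‖((q - 1 : ℝ):ℂ) + ((c1:ℝ):ℂ) * u ^ 2‖ < (q - 1) + c1 * s ^ 2 := by
    apply strict_aux (q-1) c1 (s^2) (by linarith) hc1p (by positivity)
    · rw [norm_pow, habs]
    · intro h; apply hne2; rw [h]; push_cast; ring
  have hB : ‖((c1:ℝ):ℂ) * (u⁻¹) ^ 2‖ = c1 * (s⁻¹) ^ 2 := by
    rw [norm_mul, norm_pow, habsi, Complex.norm_real, Real.norm_eq_abs, abs_of_pos hc1p]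
  have hS : ‖∑ k ∈ Finset.Icc 2 m, ((cf q m k : ℝ):ℂ) * (u ^ (2*k) + (u⁻¹) ^ (2*k))‖
      ≤ ∑ k ∈ Finset.Icc 2 m, cf q m k * (s ^ (2*k) + (s⁻¹) ^ (2*k)) := by
    refine le_trans (norm_sum_le _ _) (Finset.sum_le_sum ?_)
    intro k _
    rw [norm_mul, Complex.norm_real, Real.norm_eq_abs, abs_of_pos (cf_pos q hq m k)]
    have hterm : ‖u ^ (2*k) + (u⁻¹) ^ (2*k)‖ ≤ s ^ (2*k) + (s⁻¹) ^ (2*k) := by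
      refine le_trans (norm_add_le _ _) ?_
      rw [norm_pow, norm_pow, habs, habsi]
    exact mul_le_mul_of_nonneg_left hterm (le_of_lt (cf_pos q hq m k))
  calc ‖Tc2 q m u u⁻¹‖
      ≤ ‖((q - 1 : ℝ):ℂ) + ((c1:ℝ):ℂ) * u ^ 2‖
        + (‖((c1:ℝ):ℂ) * (u⁻¹) ^ 2‖
          + ‖∑ k ∈ Finset.Icc 2 m, ((cf q m k : ℝ):ℂ) * (u ^ (2*k) + (u⁻¹) ^ (2*k))‖) := by
        rw [hTc]
        exact le_trans (norm_add_le _ _) (by gcongr; exact norm_add_le _ _)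
    _ < Tr q m s := by
        rw [hTr, hB]
        linarith [hS, hA]

lemma qpow_Iz (q α δ : ℝ) : qpow q (Complex.I * ((α:ℂ) + Complex.I * (δ:ℂ)))
    = ((Real.exp (-(δ * Real.log q)) : ℝ):ℂ)
      * Complex.exp (((α * Real.log q : ℝ):ℂ) * Complex.I) := by
  rw [qpow, show Complex.I * ((α:ℂ) + Complex.I * (δ:ℂ)) * ((Real.log q : ℝ):ℂ)
      = ((-(δ * Real.log q) : ℝ):ℂ) + ((α * Real.log q : ℝ):ℂ) * Complex.I by
    push_cast; linear_combination (δ:ℂ) * ((Real.log q : ℝ):ℂ) * Complex.I_sq]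
  rw [Complex.exp_add, ← Complex.ofReal_exp]

lemma exp_I_ne_one (t : ℝ) (h1 : -(2*Real.pi) < t) (h2 : t < 2*Real.pi) (h3 : t ≠ 0) :
    Complex.exp ((t:ℝ) * Complex.I) ≠ 1 := by
  intro h
  rw [Complex.exp_eq_one_iff] at h
  obtain ⟨n, hn⟩ := h
  have him := congrArg Complex.im hn
  simp [Complex.mul_im] at him
  -- him : t = n * (2 * π)  (roughly)
  have hpi := Real.pi_pos
  rcases lt_trichotomy n 0 with hneg | hzero | hpos
  · have : (n:ℝ) ≤ -1 := by exact_mod_cast (by omega : n ≤ -1)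
    nlinarith
  · subst hzero; simp at him; exact h3 (by linarith [him])
  · have : (1:ℝ) ≤ (n:ℝ) := by exact_mod_cast (by omega : (1:ℤ) ≤ n)
    nlinarith

end Stmt10Aux


open Stmt10Aux in
/-- For `δ ∈ [-1/2, 0)` and every `m ≥ 1`: `φ_{iδ}(2m)` is a positive real,
`|φ_{α+iδ}(2m)| < φ_{iδ}(2m)` for real `α ∈ (-τ/2, τ/2) \ {0}`, and
`φ_{τ/2+iδ}(2m) = φ_{iδ}(2m)`. -/
theorem stmt10 (q : ℝ) (hq : 1 < q) (δ : ℝ) (hδ : δ ∈ Set.Ico (-(1/2) : ℝ) 0) (m : ℕ) (hm : 1 ≤ m) :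
    ((phiSph q (Complex.I * (δ : ℂ)) (2 * m)).im = 0 ∧
      0 < (phiSph q (Complex.I * (δ : ℂ)) (2 * m)).re) ∧
    (∀ α : ℝ, -(tauq q) / 2 < α → α < tauq q / 2 → α ≠ 0 →
      ‖phiSph q ((α : ℂ) + Complex.I * (δ : ℂ)) (2 * m)‖ <
        (phiSph q (Complex.I * (δ : ℂ)) (2 * m)).re) ∧
    phiSph q (((tauq q / 2 : ℝ) : ℂ) + Complex.I * (δ : ℂ)) (2 * m) =
      phiSph q (Complex.I * (δ : ℂ)) (2 * m) := by
  obtain ⟨hδ1, hδ2⟩ := hδ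
  set L := Real.log q with hLdef
  have hL : 0 < L := Real.log_pos hq
  set s := Real.exp (-(δ * L)) with hsdef
  have hs : 1 < s := by
    have h0 : 0 < -(δ * L) := by nlinarith
    calc (1:ℝ) = Real.exp 0 := Real.exp_zero.symm
      _ < s := Real.exp_lt_exp.mpr h0
  have hs0 : (0:ℝ) < s := by linarith
  set K : ℝ := (q ^ m)⁻¹ / (q + 1) with hKdef
  have hK : 0 < K := div_pos (inv_pos.mpr (pow_pos (by linarith) m)) (by linarith)
  -- the value of u at α = 0
  have hu0 : qpow q (Complex.I * (Complex.I * (δ:ℂ))) = ((s:ℝ):ℂ) := by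
    rw [show Complex.I * (Complex.I * (δ:ℂ)) = Complex.I * (((0:ℝ):ℂ) + Complex.I * (δ:ℂ)) by
      push_cast; ring]
    rw [qpow_Iz q 0 δ]
    simp [← hLdef, ← hsdef]
  have habs0 : ‖qpow q (Complex.I * (Complex.I * (δ:ℂ)))‖ = s := by
    rw [hu0, Complex.norm_real, Real.norm_eq_abs, abs_of_pos hs0]
  have hne0 : qpow q (Complex.I * (Complex.I * (δ:ℂ)))
      ≠ qpow q (-(Complex.I * (Complex.I * (δ:ℂ)))) :=
    qpow_ne_qpow_neg q _ (by rw [habs0]; exact hs)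
  have hphi0 : phiSph q (Complex.I * (δ:ℂ)) (2*m) = ((K * Tr q m s : ℝ) : ℂ) := by
    rw [phi_formula q hq _ m hm hne0, hu0, Tc2_ofReal, Complex.ofReal_mul]
  have hre0 : (phiSph q (Complex.I * (δ:ℂ)) (2*m)).re = K * Tr q m s := by
    rw [hphi0, Complex.ofReal_re]
  refine ⟨⟨by rw [hphi0]; exact Complex.ofReal_im _, ?_⟩, ?_, ?_⟩
  · rw [hre0]
    exact mul_pos hK (Tr_pos q hq m s hs0)
  · -- part (b)
    intro α hα1 hα2 hα0
    have htau : tauq q / 2 = Real.pi / L := by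
      rw [tauq, ← hLdef]; ring
    have ht1 : α * L < Real.pi := by
      rw [htau] at hα2
      exact (lt_div_iff₀ hL).mp hα2
    have ht2 : -Real.pi < α * L := by
      have h := mul_lt_mul_of_pos_right hα1 hL
      have h2 : -tauq q / 2 * L = -Real.pi := by
        rw [show -tauq q / 2 = -(tauq q / 2) by ring, htau]
        field_simp
      linarith
    have ht0 : α * L ≠ 0 := mul_ne_zero hα0 (ne_of_gt hL)
    have hueq : qpow q (Complex.I * ((α:ℂ) + Complex.I * (δ:ℂ)))
        = ((s:ℝ):ℂ) * Complex.exp (((α * L : ℝ):ℂ) * Complex.I) := by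
      rw [qpow_Iz q α δ, ← hLdef, ← hsdef]
    have habs : ‖qpow q (Complex.I * ((α:ℂ) + Complex.I * (δ:ℂ)))‖ = s := by
      rw [hueq, norm_mul, Complex.norm_real, Real.norm_eq_abs, abs_of_pos hs0,
        Complex.norm_exp_ofReal_mul_I, mul_one]
    have hne : qpow q (Complex.I * ((α:ℂ) + Complex.I * (δ:ℂ)))
        ≠ qpow q (-(Complex.I * ((α:ℂ) + Complex.I * (δ:ℂ)))) :=
      qpow_ne_qpow_neg q _ (by rw [habs]; exact hs)
    have hne2 : (qpow q (Complex.I * ((α:ℂ) + Complex.I * (δ:ℂ)))) ^ 2 ≠ ((s:ℂ)) ^ 2 := by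
      rw [hueq, mul_pow]
      have hexp2 : Complex.exp (((α * L : ℝ):ℂ) * Complex.I) ^ 2
          = Complex.exp (((2 * (α * L) : ℝ):ℂ) * Complex.I) := by
        rw [sq, ← Complex.exp_add]
        congr 1
        push_cast; ring
      rw [hexp2]
      intro h
      have hs2 : ((s:ℂ)) ^ 2 ≠ 0 := pow_ne_zero _ (by exact_mod_cast ne_of_gt hs0)
      have : Complex.exp (((2 * (α * L) : ℝ):ℂ) * Complex.I) = 1 := by
        apply mul_left_cancel₀ hs2
        rw [h, mul_one]
      exact exp_I_ne_one (2 * (α * L)) (by linarith) (by linarith)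
        (by simp [ht0]) this
    rw [phi_formula q hq _ m hm hne, hre0]
    rw [norm_mul, Complex.norm_real, Real.norm_eq_abs, abs_of_pos (show (0:ℝ) < (q^m)⁻¹/(q+1) from hK)]
    exact mul_lt_mul_of_pos_left (T_bound q hq m hm s hs _ habs hne2) hK
  · -- part (c)
    have htauL : tauq q / 2 * L = Real.pi := by
      rw [tauq, ← hLdef]
      field_simp
    have huc : qpow q (Complex.I * (((tauq q / 2 : ℝ):ℂ) + Complex.I * (δ:ℂ))) = -((s:ℝ):ℂ) := by
      rw [qpow_Iz q (tauq q / 2) δ, ← hLdef, ← hsdef, htauL, Complex.exp_pi_mul_I]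
      ring
    have hnec : qpow q (Complex.I * (((tauq q / 2 : ℝ):ℂ) + Complex.I * (δ:ℂ)))
        ≠ qpow q (-(Complex.I * (((tauq q / 2 : ℝ):ℂ) + Complex.I * (δ:ℂ)))) := by
      apply qpow_ne_qpow_neg
      rw [huc, norm_neg, Complex.norm_real, Real.norm_eq_abs, abs_of_pos hs0]
      exact hs
    rw [phi_formula q hq _ m hm hnec, phi_formula q hq _ m hm hne0, huc, hu0, Tc2_neg]
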